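/- Expected inverse number of Γ-bearers after the match: in the classical island model, E[U^{-1} | Γ_C=1, Γ_S=1, S=s] = 1/(1+Np), hence P(C=s | S=s, Γ_C=1, Γ_s=1) = E[U^{-1} | Γ_C=1, Γ_S=1, S=s]. -/

import Mathlib

open MeasureTheory ProbabilityTheory
open scoped ENNReal

/-- `E[U⁻¹ | I, E, S=s] = 1/(1+Np)`, and the posterior probability of guilt equals
this expected inverse number of `Γ`-bearers. -/
theorem island_expected_inverse_bearers
    {Ω : Type*} [MeasurableSpace Ω] (μ : Measure Ω) [IsProbabilityMeasure μ]
    {X : Type*} [Fintype X] [MeasurableSpace X] [MeasurableSingletonClass X]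
    (N : ℕ) (hX : Fintype.card X = N + 1)
    (C S : Ω → X) (hC : Measurable C) (hS : Measurable S)
    (Γ : X → Ω → Bool) (hΓ : ∀ x, Measurable (Γ x))
    (p : ℝ≥0∞) (hp0 : p ≠ 0) (hp1 : p ≤ 1)
    (hCunif : ∀ x : X, μ {ω | C ω = x} = 1 / (N + 1))
    (hCS : IndepFun C S μ)
    (hiid : iIndepFun Γ μ)
    (hBer : ∀ x, μ {ω | Γ x ω = true} = p)
    (hind : IndepFun (fun ω => (C ω, S ω)) (fun ω x => Γ x ω) μ)
    (U : Ω → ℕ) (hU : ∀ ω, U ω = ∑ x : X, if Γ x ω then 1 else 0)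
    (s : X)
    (hpos : μ ({ω | S ω = s} ∩ {ω | Γ (C ω) ω = true} ∩ {ω | Γ s ω = true}) ≠ 0) :
    (∫⁻ ω, (U ω : ℝ≥0∞)⁻¹
        ∂(μ[|{ω | S ω = s} ∩ {ω | Γ (C ω) ω = true} ∩ {ω | Γ s ω = true}]))
      = 1 / (1 + N * p) ∧
    μ[|{ω | S ω = s} ∩ {ω | Γ (C ω) ω = true} ∩ {ω | Γ s ω = true}] {ω | C ω = s}
      = ∫⁻ ω, (U ω : ℝ≥0∞)⁻¹
          ∂(μ[|{ω | S ω = s} ∩ {ω | Γ (C ω) ω = true} ∩ {ω | Γ s ω = true}]) := by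
  classical
  set A := {ω | S ω = s} ∩ {ω | Γ (C ω) ω = true} ∩ {ω | Γ s ω = true} with hA_def
  set T : Ω → X × X := fun ω => (C ω, S ω) with hT_def
  set G : Ω → X → Bool := fun ω x => Γ x ω with hG_def
  have hT : Measurable T := hC.prodMk hS
  have hG : Measurable G := measurable_pi_lambda _ fun x => hΓ x
  have hΓC : Measurable fun ω => Γ (C ω) ω :=
    (measurable_of_countable (fun q : (X → Bool) × X => q.1 q.2)).comp (hG.prodMk hC)
  have hA : MeasurableSet A :=
    ((hS (measurableSet_singleton s)).inter (hΓC (measurableSet_singleton true))).inter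
      ((hΓ s) (measurableSet_singleton true))
  have base : ∀ (Q : Set Ω), MeasurableSet Q →
      ∫⁻ ω, Q.indicator (fun _ => (1 : ℝ≥0∞)) ω ∂μ = μ Q := by
    intro Q hQ
    rw [← lintegral_indicator_one hQ]
    exact lintegral_congr fun ω => by simp [Set.indicator_apply]
  set u : (X → Bool) → ℕ := fun γ => ∑ x, if γ x then 1 else 0 with hu_def
  have hUG : ∀ ω, U ω = u (G ω) := fun ω => hU ω
  set φ : X → X × X → ℝ≥0∞ := fun c q => if q = (c, s) then 1 else 0 with hφ_def
  set ψ : X → (X → Bool) → ℝ≥0∞ :=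
    fun c γ => if γ c = true ∧ γ s = true then ((u γ : ℝ≥0∞))⁻¹ else 0 with hψ_def
  set ψ' : X → (X → Bool) → ℝ≥0∞ :=
    fun c γ => if γ c = true ∧ γ s = true then 1 else 0 with hψ'_def
  have factor : ∀ (f : X × X → ℝ≥0∞) (g : (X → Bool) → ℝ≥0∞),
      ∫⁻ ω, f (T ω) * g (G ω) ∂μ
        = (∫⁻ ω, f (T ω) ∂μ) * ∫⁻ ω, g (G ω) ∂μ := by
    intro f g
    exact lintegral_mul_eq_lintegral_mul_lintegral_of_indepFun
      ((measurable_of_countable f).comp hT) ((measurable_of_countable g).comp hG)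
      (hind.comp (measurable_of_countable f) (measurable_of_countable g))
  set t := μ {ω | S ω = s} with ht_def
  have hφint : ∀ c, ∫⁻ ω, φ c (T ω) ∂μ = 1 / (N + 1) * t := by
    intro c
    have h1 : ∫⁻ ω, φ c (T ω) ∂μ = μ {ω | T ω = (c, s)} := by
      rw [← base {ω | T ω = (c, s)} (hT (measurableSet_singleton (c, s)))]
      refine lintegral_congr fun ω => ?_
      by_cases h : T ω = (c, s) <;> simp [hφ_def, h, Set.indicator_apply]
    have h2 : {ω | T ω = (c, s)} = C ⁻¹' {c} ∩ S ⁻¹' {s} := by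
      ext ω; simp [hT_def, Prod.ext_iff]
    rw [h1, h2, hCS.measure_inter_preimage_eq_mul _ _ (measurableSet_singleton c)
      (measurableSet_singleton s)]
    have hc : μ (C ⁻¹' {c}) = 1 / (N + 1) := hCunif c
    rw [hc]; rfl
  have hψ'int : ∀ c, ∫⁻ ω, ψ' c (G ω) ∂μ = if c = s then p else p * p := by
    intro c
    have hmeas : MeasurableSet {ω | Γ c ω = true ∧ Γ s ω = true} :=
      ((hΓ c) (measurableSet_singleton true)).inter ((hΓ s) (measurableSet_singleton true))
    have h1 : ∫⁻ ω, ψ' c (G ω) ∂μ = μ {ω | Γ c ω = true ∧ Γ s ω = true} := by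
      rw [← base _ hmeas]
      refine lintegral_congr fun ω => ?_
      by_cases h2 : Γ c ω = true <;> by_cases h3 : Γ s ω = true <;>
        simp [hψ'_def, hG_def, h2, h3, Set.indicator_apply]
    by_cases hcs : c = s
    · subst hcs
      rw [h1, if_pos rfl, ← hBer c]
      congr 1; ext ω; simp
    · rw [h1, if_neg hcs]
      have h2 : {ω | Γ c ω = true ∧ Γ s ω = true} = (Γ c) ⁻¹' {true} ∩ (Γ s) ⁻¹' {true} := rfl
      rw [h2, (hiid.indepFun hcs).measure_inter_preimage_eq_mul _ _
        (measurableSet_singleton true) (measurableSet_singleton true)]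
      rw [show μ ((Γ c) ⁻¹' {true}) = p from hBer c, show μ ((Γ s) ⁻¹' {true}) = p from hBer s]
  have hψsum : ∀ γ : X → Bool, ∑ c, ψ c γ = if γ s = true then (1 : ℝ≥0∞) else 0 := by
    intro γ
    by_cases hγs : γ s = true
    · rw [if_pos hγs]
      have hle : 1 ≤ u γ := by
        have h := Finset.single_le_sum (f := fun x => if γ x then (1 : ℕ) else 0)
          (fun i _ => Nat.zero_le _) (Finset.mem_univ s)
        simpa [hu_def, hγs] using h
      have hne0 : ((u γ : ℝ≥0∞)) ≠ 0 := by
        exact_mod_cast Nat.one_le_iff_ne_zero.mp hle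
      have hcast : ((u γ : ℕ) : ℝ≥0∞) = ∑ c, if γ c = true then (1 : ℝ≥0∞) else 0 := by
        rw [hu_def]
        push_cast
        exact Finset.sum_congr rfl fun c _ => by by_cases h : γ c = true <;> simp [h]
      calc ∑ c, ψ c γ
          = ∑ c, (if γ c = true then (1 : ℝ≥0∞) else 0) * (u γ : ℝ≥0∞)⁻¹ := by
            refine Finset.sum_congr rfl fun c _ => ?_
            by_cases h : γ c = true <;> simp [hψ_def, h, hγs]
        _ = (∑ c, if γ c = true then (1 : ℝ≥0∞) else 0) * (u γ : ℝ≥0∞)⁻¹ :=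
            (Finset.sum_mul _ _ _).symm
        _ = (u γ : ℝ≥0∞) * (u γ : ℝ≥0∞)⁻¹ := by rw [← hcast]
        _ = 1 := ENNReal.mul_inv_cancel hne0 (ENNReal.natCast_ne_top _)
    · rw [if_neg hγs]
      refine Finset.sum_eq_zero fun c _ => ?_
      simp [hψ_def, hγs]
  have hψG : ∀ c, Measurable (fun ω => ψ c (G ω)) :=
    fun c => (measurable_of_countable (ψ c)).comp hG
  have hψint : ∑ c, ∫⁻ ω, ψ c (G ω) ∂μ = p := by
    calc ∑ c, ∫⁻ ω, ψ c (G ω) ∂μ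
        = ∫⁻ ω, ∑ c, ψ c (G ω) ∂μ := (lintegral_finset_sum _ (fun c _ => hψG c)).symm
      _
        = ∫⁻ ω, (if Γ s ω = true then (1 : ℝ≥0∞) else 0) ∂μ :=
          lintegral_congr fun ω => hψsum (G ω)
      _ = μ {ω | Γ s ω = true} := by
          rw [← base {ω | Γ s ω = true} ((hΓ s) (measurableSet_singleton true))]
          refine lintegral_congr fun ω => ?_
          by_cases h : Γ s ω = true <;> simp [h, Set.indicator_apply]
      _ = p := hBer s
  have key : ∀ (ξ : X → (X → Bool) → ℝ≥0∞),
      ∫⁻ ω, ∑ c, φ c (T ω) * ξ c (G ω) ∂μ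
        = 1 / (N + 1) * t * ∑ c, ∫⁻ ω, ξ c (G ω) ∂μ := by
    intro ξ
    have hm : ∀ c, Measurable (fun ω => φ c (T ω) * ξ c (G ω)) := fun c =>
      ((measurable_of_countable (φ c)).comp hT).mul ((measurable_of_countable (ξ c)).comp hG)
    calc ∫⁻ ω, ∑ c, φ c (T ω) * ξ c (G ω) ∂μ
        = ∑ c, ∫⁻ ω, φ c (T ω) * ξ c (G ω) ∂μ := lintegral_finset_sum _ (fun c _ => hm c)
      _
        = ∑ c, (1 / (N + 1) * t) * ∫⁻ ω, ξ c (G ω) ∂μ := by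
          refine Finset.sum_congr rfl fun c _ => ?_
          rw [factor (φ c) (ξ c), hφint c]
      _ = _ := by rw [← Finset.mul_sum]
  have hptA : ∀ ω, A.indicator (fun ω => ((U ω : ℝ≥0∞))⁻¹) ω
      = ∑ c, φ c (T ω) * ψ c (G ω) := by
    intro ω
    rw [Finset.sum_eq_single (C ω) (fun b _ hb => by
        have hne : T ω ≠ (b, s) := by
          intro h
          exact hb (congrArg Prod.fst h).symm
        simp [hφ_def, hne])
      (fun h => absurd (Finset.mem_univ _) h)]
    have hTs : (T ω = (C ω, s)) ↔ S ω = s := by simp [hT_def, Prod.ext_iff]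
    have hGC : G ω (C ω) = Γ (C ω) ω := rfl
    have hGs : G ω s = Γ s ω := rfl
    by_cases h1 : S ω = s <;> by_cases h2 : Γ (C ω) ω = true <;> by_cases h3 : Γ s ω = true <;>
      simp [hφ_def, hψ_def, Set.indicator_apply, hA_def, hTs, hGC, hGs, h1, h2, h3,
        Set.mem_inter_iff, Set.mem_setOf_eq, hUG ω]
  have hnum : ∫⁻ ω in A, (U ω : ℝ≥0∞)⁻¹ ∂μ = 1 / (N + 1) * t * p := by
    rw [← lintegral_indicator hA, lintegral_congr hptA, key ψ, hψint]
  have hptA' : ∀ ω, A.indicator (fun _ => (1 : ℝ≥0∞)) ω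
      = ∑ c, φ c (T ω) * ψ' c (G ω) := by
    intro ω
    rw [Finset.sum_eq_single (C ω) (fun b _ hb => by
        have hne : T ω ≠ (b, s) := by
          intro h
          exact hb (congrArg Prod.fst h).symm
        simp [hφ_def, hne])
      (fun h => absurd (Finset.mem_univ _) h)]
    have hTs : (T ω = (C ω, s)) ↔ S ω = s := by simp [hT_def, Prod.ext_iff]
    have hGC : G ω (C ω) = Γ (C ω) ω := rfl
    have hGs : G ω s = Γ s ω := rfl
    by_cases h1 : S ω = s <;> by_cases h2 : Γ (C ω) ω = true <;> by_cases h3 : Γ s ω = true <;>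
      simp [hφ_def, hψ'_def, Set.indicator_apply, hA_def, hTs, hGC, hGs, h1, h2, h3,
        Set.mem_inter_iff, Set.mem_setOf_eq]
  have hden : μ A = 1 / (N + 1) * t * (p + N * (p * p)) := by
    rw [← base A hA, lintegral_congr hptA', key ψ']
    congr 1
    calc ∑ c, ∫⁻ ω, ψ' c (G ω) ∂μ
        = ∑ c, (if c = s then p else p * p) := Finset.sum_congr rfl fun c _ => hψ'int c
      _ = p + N * (p * p) := by
          rw [← Finset.add_sum_erase _ (fun c => if c = s then p else p * p)
            (Finset.mem_univ s), if_pos rfl]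
          congr 1
          rw [Finset.sum_congr rfl (fun c hc => if_neg (Finset.ne_of_mem_erase hc)),
            Finset.sum_const, Finset.card_erase_of_mem (Finset.mem_univ s),
            Finset.card_univ, hX]
          simp [nsmul_eq_mul]
  have hguilt : μ (A ∩ {ω | C ω = s}) = 1 / (N + 1) * t * p := by
    have hpt : ∀ ω, (A ∩ {ω | C ω = s}).indicator (fun _ => (1 : ℝ≥0∞)) ω
        = φ s (T ω) * ψ' s (G ω) := by
      intro ω
      have hGs : G ω s = Γ s ω := rfl
      by_cases h1 : C ω = s <;> by_cases h2 : S ω = s <;> by_cases h3 : Γ s ω = true <;>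
        simp [hφ_def, hψ'_def, Set.indicator_apply, hA_def, hT_def, Prod.ext_iff, hGs,
          h1, h2, h3, Set.mem_inter_iff, Set.mem_setOf_eq]
    have hm : MeasurableSet (A ∩ {ω | C ω = s}) := hA.inter (hC (measurableSet_singleton s))
    rw [← base _ hm, lintegral_congr hpt, factor (φ s) (ψ' s), hφint s,
      hψ'int s, if_pos rfl]
  -- arithmetic
  have ht0 : t ≠ 0 := by
    intro h
    exact hpos (measure_mono_null (fun ω hω => hω.1.1) h)
  have htne : t ≠ ∞ := (measure_lt_top μ _).ne
  have hpne : p ≠ ∞ := (lt_of_le_of_lt hp1 ENNReal.one_lt_top).ne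
  have hN1top : ((N : ℝ≥0∞) + 1) ≠ ∞ :=
    ENNReal.add_ne_top.mpr ⟨ENNReal.natCast_ne_top N, ENNReal.one_ne_top⟩
  have ha0 : (1 / (N + 1) : ℝ≥0∞) * t ≠ 0 := by
    refine mul_ne_zero ?_ ht0
    simp [ENNReal.div_eq_zero_iff, hN1top]
  have hane : (1 / (N + 1) : ℝ≥0∞) * t ≠ ∞ := by
    refine ENNReal.mul_ne_top ?_ htne
    simp [ENNReal.div_eq_top]
  have hap0 : (1 / (N + 1) : ℝ≥0∞) * t * p ≠ 0 := mul_ne_zero ha0 hp0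
  have hapne : (1 / (N + 1) : ℝ≥0∞) * t * p ≠ ∞ := ENNReal.mul_ne_top hane hpne
  have hfac : p + (N : ℝ≥0∞) * (p * p) = p * (1 + N * p) := by ring
  have harith : (1 / (N + 1) * t * (p + N * (p * p)))⁻¹ * (1 / (N + 1) * t * p)
      = 1 / (1 + (N : ℝ≥0∞) * p) := by
    rw [hfac, show (1 / (N + 1) : ℝ≥0∞) * t * (p * (1 + N * p))
        = (1 / (N + 1) * t * p) * (1 + N * p) by ring]
    rw [ENNReal.mul_inv (Or.inl hap0) (Or.inl hapne), mul_comm ((1 / (N + 1) * t * p)⁻¹) _,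
      mul_assoc, ENNReal.inv_mul_cancel hap0 hapne, mul_one, one_div]
  have hcond : ∫⁻ ω, (U ω : ℝ≥0∞)⁻¹ ∂(μ[|A]) = (μ A)⁻¹ * ∫⁻ ω in A, (U ω : ℝ≥0∞)⁻¹ ∂μ := by
    rw [show μ[|A] = (μ A)⁻¹ • μ.restrict A from rfl, lintegral_smul_measure, smul_eq_mul]
  have hE : ∫⁻ ω, (U ω : ℝ≥0∞)⁻¹ ∂(μ[|A]) = 1 / (1 + N * p) := by
    rw [hcond, hnum, hden, harith]
  refine ⟨hE, ?_⟩
  rw [hE, ProbabilityTheory.cond_apply hA, hguilt, hden, harith]
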